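/- Fidelity ordering lemma: let ρ and σ be positive semidefinite n×n matrices with eigenvalues r_1 ≥ … ≥ r_n and s_1 ≥ … ≥ s_n respectively. Then ‖√ρ√σ‖₁ ≤ Σ_i √(r_i s_i). Moreover, if σ = Σ_i s_i|i⟩⟨i| and ρ̃ := Σ_i r_i|i⟩⟨i| (same eigenbasis, eigenvalues matched in non-increasing order), equality ‖√ρ̃√σ‖₁ = Σ_i √(r_i s_i) holds. -/

import Mathlib

open Matrix
open scoped ComplexOrder Classical

noncomputable section

/-- PSD square root (junk value 0 if not PSD). -/
def psdSqrt {n : Type*} [Fintype n] [DecidableEq n] (A : Matrix n n ℂ) : Matrix n n ℂ :=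
  if h : A.PosSemidef then
    h.1.eigenvectorUnitary.1 * diagonal ((↑) ∘ (√·) ∘ h.1.eigenvalues) *
      (star h.1.eigenvectorUnitary : Matrix n n ℂ)
  else 0

/-- trace norm `‖A‖₁ = tr √(A Aᴴ)`. -/
def trNorm {n : Type*} [Fintype n] [DecidableEq n] (A : Matrix n n ℂ) : ℝ :=
  ((psdSqrt (A * A.conjTranspose)).trace).re

namespace FidAux


variable {n : ℕ}

lemma vmv_mul (a b c d : Fin n → ℂ) :
    vecMulVec a b * vecMulVec c d = (b ⬝ᵥ c) • vecMulVec a d := by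
  ext i j
  simp only [mul_apply, vecMulVec_apply, Matrix.smul_apply, dotProduct, Finset.sum_mul, smul_eq_mul]
  exact Finset.sum_congr rfl fun k _ => by ring

lemma vmv_mulVec (a b x : Fin n → ℂ) :
    vecMulVec a b *ᵥ x = (b ⬝ᵥ x) • a := by
  ext i
  simp only [mulVec, dotProduct, vecMulVec_apply, Pi.smul_apply, smul_eq_mul, Finset.sum_mul]
  exact Finset.sum_congr rfl fun k _ => by ring

lemma vmv_trace (a b : Fin n → ℂ) : (vecMulVec a b).trace = a ⬝ᵥ b := by
  simp [trace, Matrix.diag, vecMulVec_apply, dotProduct]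

lemma vmv_conjTranspose (a b : Fin n → ℂ) :
    (vecMulVec a b)ᴴ = vecMulVec (star b) (star a) := by
  ext i j
  simp [conjTranspose_apply, vecMulVec_apply, mul_comm]

lemma sum_mulVec {ι : Type*} (s : Finset ι) (M : ι → Matrix (Fin n) (Fin n) ℂ) (x : Fin n → ℂ) :
    (∑ i ∈ s, M i) *ᵥ x = ∑ i ∈ s, M i *ᵥ x := by
  ext j
  simp only [Finset.sum_apply, mulVec, dotProduct, Matrix.sum_apply, Finset.sum_mul]
  exact Finset.sum_comm

lemma dp_sum {ι : Type*} (s : Finset ι) (x : Fin n → ℂ) (f : ι → Fin n → ℂ) :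
    x ⬝ᵥ (∑ i ∈ s, f i) = ∑ i ∈ s, x ⬝ᵥ f i := by
  simp only [dotProduct, Finset.sum_apply, Finset.mul_sum]
  exact Finset.sum_comm

lemma sum_dp {ι : Type*} (s : Finset ι) (x : Fin n → ℂ) (f : ι → Fin n → ℂ) :
    (∑ i ∈ s, f i) ⬝ᵥ x = ∑ i ∈ s, f i ⬝ᵥ x := by
  simp only [dotProduct, Finset.sum_apply, Finset.sum_mul]
  exact Finset.sum_comm

section onb
variable (e : Fin n → Fin n → ℂ)
  (he : ∀ i i', star (e i) ⬝ᵥ e i' = if i = i' then 1 else 0)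

include he

lemma sum_vmv_mul (c d : Fin n → ℂ) :
    (∑ i, c i • vecMulVec (e i) (star (e i))) * (∑ i, d i • vecMulVec (e i) (star (e i)))
      = ∑ i, (c i * d i) • vecMulVec (e i) (star (e i)) := by
  rw [Finset.sum_mul_sum]
  have : ∀ i j, (c i • vecMulVec (e i) (star (e i))) * (d j • vecMulVec (e j) (star (e j)))
      = if i = j then (c i * d i) • vecMulVec (e i) (star (e i)) else 0 := by
    intro i j
    rw [Matrix.smul_mul, Matrix.mul_smul, vmv_mul, he]
    by_cases h : i = j
    · subst h; simp [smul_smul]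
    · simp [h]
  simp_rw [this]
  simp

lemma sum_vmv_mulVec (c : Fin n → ℂ) (l : Fin n) :
    (∑ i, c i • vecMulVec (e i) (star (e i))) *ᵥ e l = c l • e l := by
  rw [sum_mulVec]
  have : ∀ i, (c i • vecMulVec (e i) (star (e i))) *ᵥ e l
      = if i = l then c l • e l else 0 := by
    intro i
    rw [Matrix.smul_mulVec, vmv_mulVec, he]
    by_cases h : i = l
    · subst h; simp
    · simp [h]
  simp_rw [this]
  simp

lemma sum_vmv_isHermitian (c : Fin n → ℝ) :
    (∑ i, ((c i : ℝ) : ℂ) • vecMulVec (e i) (star (e i))).IsHermitian := by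
  unfold Matrix.IsHermitian
  rw [conjTranspose_sum]
  refine Finset.sum_congr rfl fun i _ => ?_
  rw [conjTranspose_smul, vmv_conjTranspose, star_star]
  simp [Complex.star_def, Complex.conj_ofReal]

lemma sum_vmv_posSemidef (c : Fin n → ℝ) (hc : ∀ i, 0 ≤ c i) :
    (∑ i, ((c i : ℝ) : ℂ) • vecMulVec (e i) (star (e i))).PosSemidef := by
  refine PosSemidef.of_dotProduct_mulVec_nonneg (sum_vmv_isHermitian e he c) fun x => ?_
  rw [sum_mulVec]
  simp_rw [Matrix.smul_mulVec, vmv_mulVec, dp_sum]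
  have hterm : ∀ i, star x ⬝ᵥ ((c i : ℂ) • ((star (e i) ⬝ᵥ x) • e i))
      = ((c i * Complex.normSq (star (e i) ⬝ᵥ x) : ℝ) : ℂ) := by
    intro i
    have hz : star x ⬝ᵥ e i = star (star (e i) ⬝ᵥ x) := star_dotProduct _ _
    rw [dotProduct_smul, dotProduct_smul, hz, smul_eq_mul, smul_eq_mul, Complex.star_def,
      Complex.mul_conj, ← Complex.ofReal_mul]
  simp_rw [hterm]
  refine Finset.sum_nonneg fun i _ => ?_
  rw [Complex.zero_le_real]
  exact mul_nonneg (hc i) (Complex.normSq_nonneg _)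

open scoped MatrixOrder in
lemma psdSqrt_eq_cfcSqrt (M : Matrix (Fin n) (Fin n) ℂ) (hM : M.PosSemidef) :
    psdSqrt M = CFC.sqrt M := by
  rw [CFC.sqrt_eq_cfc, cfc_nnreal_eq_real _ M, hM.1.cfc_eq, psdSqrt, dif_pos hM]
  simp only [IsHermitian.cfc, Unitary.conjStarAlgAut_apply, Real.coe_sqrt, Real.coe_toNNReal']
  congr 3
  funext i
  simp [Real.sqrt_eq_zero', max_eq_left (hM.eigenvalues_nonneg i)]

open scoped MatrixOrder in
lemma psdSqrt_sum (c : Fin n → ℝ) (hc : ∀ i, 0 ≤ c i) :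
    psdSqrt (∑ i, ((c i : ℝ) : ℂ) • vecMulVec (e i) (star (e i)))
      = ∑ i, ((Real.sqrt (c i) : ℝ) : ℂ) • vecMulVec (e i) (star (e i)) := by
  have hM := sum_vmv_posSemidef e he c hc
  have hS := sum_vmv_posSemidef e he (fun i => Real.sqrt (c i)) (fun i => Real.sqrt_nonneg _)
  rw [psdSqrt_eq_cfcSqrt e he _ hM]
  refine (CFC.sqrt_eq_iff _ _ hM.nonneg hS.nonneg).mpr ?_
  rw [sum_vmv_mul e he]
  refine Finset.sum_congr rfl fun i _ => ?_
  rw [← Complex.ofReal_mul, Real.mul_self_sqrt (hc i)]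

lemma sum_vmv_trace (c : Fin n → ℂ) :
    (∑ i, c i • vecMulVec (e i) (star (e i))).trace = ∑ i, c i := by
  rw [trace_sum]
  refine Finset.sum_congr rfl fun i _ => ?_
  rw [trace_smul, vmv_trace, dotProduct_comm, he]
  simp

end onb

variable {n : ℕ}

section onb
variable (e : Fin n → Fin n → ℂ)
  (he : ∀ i i', star (e i) ⬝ᵥ e i' = if i = i' then 1 else 0)

include he

lemma parseval2 (x y : Fin n → ℂ) :
    ∑ j, (star (e j) ⬝ᵥ x) * star (star (e j) ⬝ᵥ y) = star y ⬝ᵥ x := by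
  set V : Matrix (Fin n) (Fin n) ℂ := Matrix.of fun j i => star (e j i) with hV
  have hVmul : V * Vᴴ = 1 := by
    ext j j'
    have := he j j'
    simp only [dotProduct, Pi.star_apply] at this
    simp only [mul_apply, conjTranspose_apply, hV, of_apply, star_star, one_apply]
    rw [← this]
  have hVmul' : Vᴴ * V = 1 := mul_eq_one_comm.mp hVmul
  have hVx : ∀ z : Fin n → ℂ, ∀ j, (V *ᵥ z) j = star (e j) ⬝ᵥ z := by
    intro z j
    simp [hV, mulVec, dotProduct, Pi.star_apply]
  have key : star (V *ᵥ y) ⬝ᵥ (V *ᵥ x) = star y ⬝ᵥ x := by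
    rw [star_mulVec, ← dotProduct_mulVec, mulVec_mulVec, hVmul', one_mulVec]
  rw [← key]
  simp only [dotProduct, Pi.star_apply, hVx]
  exact Finset.sum_congr rfl fun j _ => by ring

lemma parseval1 (x : Fin n → ℂ) :
    ∑ j, Complex.normSq (star (e j) ⬝ᵥ x) = (star x ⬝ᵥ x).re := by
  have h := congrArg Complex.re (parseval2 e he x x)
  rw [← h, Complex.re_sum]
  refine Finset.sum_congr rfl fun j _ => ?_
  rw [Complex.star_def, Complex.mul_conj]
  exact (Complex.ofReal_re _).symm

end onb

lemma psd_spectral (M : Matrix (Fin n) (Fin n) ℂ) (hM : M.PosSemidef) :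
    ∃ t : Fin n → ℝ, ∃ w : Fin n → Fin n → ℂ,
      (∀ k, 0 ≤ t k) ∧ (∀ k l, star (w k) ⬝ᵥ w l = if k = l then 1 else 0) ∧
      M = ∑ k, ((t k : ℝ) : ℂ) • vecMulVec (w k) (star (w k)) := by
  have hH := hM.1
  set U : Matrix (Fin n) (Fin n) ℂ := (Matrix.IsHermitian.eigenvectorUnitary hH : Matrix (Fin n) (Fin n) ℂ) with hUdef
  refine ⟨hH.eigenvalues, fun k => fun i => U i k, fun k => hM.eigenvalues_nonneg k, ?_, ?_⟩
  · intro k l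
    have hU1 : star U * U = 1 :=
      mul_eq_one_comm.mp ((Matrix.mem_unitaryGroup_iff).mp (Matrix.IsHermitian.eigenvectorUnitary hH).2)
    have := congrFun (congrFun hU1 k) l
    simp only [Matrix.mul_apply, Matrix.star_apply, Matrix.one_apply] at this
    rw [← this]
    simp [dotProduct, Pi.star_apply]
  · conv_lhs => rw [hH.spectral_theorem]
    rw [Unitary.conjStarAlgAut_apply, Matrix.star_eq_conjTranspose]
    ext i j
    rw [Matrix.mul_apply]
    simp only [Matrix.mul_diagonal, conjTranspose_apply, Function.comp_apply, Matrix.sum_apply,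
      Matrix.smul_apply, vecMulVec_apply, Pi.star_apply, smul_eq_mul]
    exact Finset.sum_congr rfl fun k _ => by
      rw [show (RCLike.ofReal (hH.eigenvalues k) : ℂ) = ((hH.eigenvalues k : ℝ) : ℂ) from rfl]; ring

lemma besselish (φ : Fin n → Fin n → ℂ) (P : Fin n → Prop) [DecidablePred P]
    (hφ : ∀ k l, star (φ k) ⬝ᵥ φ l = if k = l then (if P k then 1 else 0) else 0)
    (x : Fin n → ℂ) :
    ∑ k, Complex.normSq (star (φ k) ⬝ᵥ x) ≤ (star x ⬝ᵥ x).re := by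
  have hzero : ∀ k, ¬ P k → φ k = 0 := by
    intro k hk
    have h := hφ k k
    simp only [if_pos rfl, if_neg hk] at h
    exact dotProduct_star_self_eq_zero.mp h
  set c : Fin n → ℂ := fun k => star (φ k) ⬝ᵥ x with hc
  have hxφ : ∀ k, star x ⬝ᵥ φ k = star (c k) := fun k => star_dotProduct _ _
  have hsq : ∀ k, star (c k) * c k = ((Complex.normSq (c k) : ℝ) : ℂ) := by
    intro k
    rw [Complex.star_def, mul_comm, Complex.mul_conj]
  set S : ℝ := ∑ k, Complex.normSq (c k) with hS
  have hT2 : star x ⬝ᵥ (∑ k, c k • φ k) = ((S : ℝ) : ℂ) := by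
    rw [dp_sum, hS]
    push_cast
    refine Finset.sum_congr rfl fun k _ => ?_
    rw [dotProduct_smul, smul_eq_mul, hxφ, mul_comm, hsq]
  have hstary : star (∑ k, c k • φ k) = ∑ k, star (c k) • star (φ k) := by
    rw [star_sum]
    exact Finset.sum_congr rfl fun k _ => star_smul _ _
  have hT3 : star (∑ k, c k • φ k) ⬝ᵥ x = ((S : ℝ) : ℂ) := by
    rw [hstary, sum_dp, hS]
    push_cast
    refine Finset.sum_congr rfl fun k _ => ?_
    rw [smul_dotProduct, smul_eq_mul, hsq]
  have hT4 : star (∑ k, c k • φ k) ⬝ᵥ (∑ k, c k • φ k) = ((S : ℝ) : ℂ) := by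
    rw [hstary, sum_dp, hS]
    push_cast
    refine Finset.sum_congr rfl fun k _ => ?_
    rw [smul_dotProduct, dp_sum]
    simp_rw [dotProduct_smul, hφ, smul_eq_mul]
    have : ∀ l, c l * (if k = l then (if P k then (1:ℂ) else 0) else 0)
        = if k = l then (c k * (if P k then 1 else 0)) else 0 := by
      intro l
      by_cases h : k = l
      · subst h; simp
      · simp [h]
    simp_rw [this]
    rw [Finset.sum_ite_eq]
    simp only [Finset.mem_univ, if_true]
    by_cases hP : P k
    · rw [if_pos hP, mul_one, hsq]
    · have : c k = 0 := by rw [hc]; simp [hzero k hP]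
      rw [this]
      simp
  set y : Fin n → ℂ := x - ∑ k, c k • φ k with hy
  have hyy : star y ⬝ᵥ y = star x ⬝ᵥ x - ((S : ℝ) : ℂ) := by
    rw [hy, star_sub, sub_dotProduct, dotProduct_sub, dotProduct_sub, hT2, hT3, hT4]
    ring
  have hpos : 0 ≤ star y ⬝ᵥ y := dotProduct_star_self_nonneg y
  rw [hyy] at hpos
  have hre := (Complex.le_def.mp hpos).1
  simp only [Complex.zero_re, Complex.sub_re, Complex.ofReal_re] at hre
  linarith

lemma swap_ite {ι κ : Type*} (s : Finset ι) (t : Finset κ) (Q : ι → κ → Prop)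
    [∀ i k, Decidable (Q i k)] (d : κ → ℝ) (C : ι → ℝ) :
    ∑ x ∈ s, (∑ p ∈ t, if Q x p then d p else 0) * C x
      = ∑ p ∈ t, d p * ∑ x ∈ s, (if Q x p then 1 else 0) * C x := by
  simp_rw [Finset.sum_mul, Finset.mul_sum]
  rw [Finset.sum_comm]
  refine Finset.sum_congr rfl fun p _ => Finset.sum_congr rfl fun x _ => ?_
  by_cases h : Q x p <;> simp [h]

lemma ds_bound (a b : Fin n → ℝ) (D : Fin n → Fin n → ℝ)
    (ha : Antitone a) (hb : Antitone b) (ha0 : ∀ i, 0 ≤ a i) (hb0 : ∀ i, 0 ≤ b i)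
    (hD0 : ∀ i j, 0 ≤ D i j) (hrow : ∀ i, ∑ j, D i j ≤ 1) (hcol : ∀ j, ∑ i, D i j ≤ 1) :
    ∑ i, ∑ j, a i * b j * D i j ≤ ∑ i, a i * b i := by
  classical
  set f : ℕ → ℝ := fun p => if h : p < n then a ⟨p, h⟩ else 0 with hf
  set g : ℕ → ℝ := fun p => if h : p < n then b ⟨p, h⟩ else 0 with hg
  have hfmono : ∀ p, f (p + 1) ≤ f p := by
    intro p; rw [hf]; dsimp only
    split
    · rename_i h1
      rw [dif_pos (Nat.lt_of_succ_lt h1)]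
      exact ha (by exact_mod_cast Nat.le_succ p)
    · rename_i h1
      split
      · exact ha0 _
      · exact le_refl 0
  have hgmono : ∀ p, g (p + 1) ≤ g p := by
    intro p; rw [hg]; dsimp only
    split
    · rename_i h1
      rw [dif_pos (Nat.lt_of_succ_lt h1)]
      exact hb (by exact_mod_cast Nat.le_succ p)
    · rename_i h1
      split
      · exact hb0 _
      · exact le_refl 0
  set δ : ℕ → ℝ := fun p => f p - f (p + 1) with hδ
  set ε : ℕ → ℝ := fun p => g p - g (p + 1) with hε
  have hδ0 : ∀ p, 0 ≤ δ p := fun p => sub_nonneg.mpr (hfmono p)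
  have hε0 : ∀ p, 0 ≤ ε p := fun p => sub_nonneg.mpr (hgmono p)
  have htel : ∀ (F : ℕ → ℝ), (∀ m, ¬ m < n → F m = 0) → ∀ i : Fin n,
      F i = ∑ p ∈ Finset.range n, (if (i : ℕ) ≤ p then F p - F (p + 1) else 0) := by
    intro F hFz i
    have hioc : (Finset.range n).filter (fun p => (i : ℕ) ≤ p) = Finset.Ico (i : ℕ) n := by
      ext p
      simp [Finset.mem_Ico, Finset.mem_range, and_comm]
    rw [← Finset.sum_filter, hioc,
      Finset.sum_Ico_eq_sub (fun p => F p - F (p + 1)) (le_of_lt i.2),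
      Finset.sum_range_sub' F, Finset.sum_range_sub' F, hFz n (lt_irrefl n)]
    ring
  have hfa : ∀ i : Fin n, a i = ∑ p ∈ Finset.range n, (if (i : ℕ) ≤ p then δ p else 0) := by
    intro i
    have hFz : ∀ m, ¬ m < n → f m = 0 := fun m hm => dif_neg hm
    have h1 := htel f hFz i
    rw [hf] at h1
    simp only [dif_pos i.2, Fin.eta] at h1
    rw [h1]
  have hgb : ∀ i : Fin n, b i = ∑ p ∈ Finset.range n, (if (i : ℕ) ≤ p then ε p else 0) := by
    intro i
    have hFz : ∀ m, ¬ m < n → g m = 0 := fun m hm => dif_neg hm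
    have h1 := htel g hFz i
    rw [hg] at h1
    simp only [dif_pos i.2, Fin.eta] at h1
    rw [h1]
  set ind : Prop → ℝ := fun P => if P then 1 else 0 with hind
  have hind0 : ∀ P : Prop, 0 ≤ (if h : True then (if P then (1:ℝ) else 0) else 0) := by
    intro P; simp; by_cases h : P <;> simp [h]
  -- LHS transformation
  have hL : ∑ i, ∑ j, a i * b j * D i j
      = ∑ p ∈ Finset.range n, δ p * ∑ q ∈ Finset.range n, ε q *
          (∑ j : Fin n, (if (j : ℕ) ≤ q then (1:ℝ) else 0) * ∑ i : Fin n, (if (i : ℕ) ≤ p then (1:ℝ) else 0) * D i j) := by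
    have step1 : ∑ i, ∑ j, a i * b j * D i j = ∑ i : Fin n, a i * (∑ j, b j * D i j) := by
      refine Finset.sum_congr rfl fun i _ => ?_
      rw [Finset.mul_sum]
      exact Finset.sum_congr rfl fun j _ => by ring
    rw [step1]
    have step2 : ∑ i : Fin n, a i * (∑ j, b j * D i j)
        = ∑ p ∈ Finset.range n, δ p * ∑ i : Fin n, (if (i : ℕ) ≤ p then (1:ℝ) else 0) * (∑ j, b j * D i j) := by
      rw [← swap_ite Finset.univ (Finset.range n) (fun (i : Fin n) p => (i : ℕ) ≤ p) δ
        (fun i => ∑ j, b j * D i j)]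
      exact Finset.sum_congr rfl fun i _ => by rw [← hfa i]
    rw [step2]
    refine Finset.sum_congr rfl fun p _ => ?_
    congr 1
    have step3 : ∑ i : Fin n, (if (i : ℕ) ≤ p then (1:ℝ) else 0) * (∑ j, b j * D i j)
        = ∑ j, b j * ∑ i : Fin n, (if (i : ℕ) ≤ p then (1:ℝ) else 0) * D i j := by
      simp_rw [Finset.mul_sum]
      rw [Finset.sum_comm]
      refine Finset.sum_congr rfl fun j _ => Finset.sum_congr rfl fun i _ => by ring
    rw [step3]
    have step4 : ∑ j, b j * (∑ i : Fin n, (if (i : ℕ) ≤ p then (1:ℝ) else 0) * D i j)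
        = ∑ j : Fin n, (∑ q ∈ Finset.range n, (if (j : ℕ) ≤ q then ε q else 0)) *
            (∑ i : Fin n, (if (i : ℕ) ≤ p then (1:ℝ) else 0) * D i j) := by
      exact Finset.sum_congr rfl fun j _ => by rw [← hgb j]
    rw [step4, swap_ite]
  -- RHS transformation
  have hR : ∑ i, a i * b i
      = ∑ p ∈ Finset.range n, δ p * ∑ q ∈ Finset.range n, ε q *
          (∑ i : Fin n, (if (i : ℕ) ≤ q then (1:ℝ) else 0) * (if (i : ℕ) ≤ p then (1:ℝ) else 0)) := by
    have step2 : ∑ i, a i * b i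
        = ∑ p ∈ Finset.range n, δ p * ∑ i : Fin n, (if (i : ℕ) ≤ p then (1:ℝ) else 0) * b i := by
      rw [← swap_ite Finset.univ (Finset.range n) (fun (i : Fin n) p => (i : ℕ) ≤ p) δ b]
      exact Finset.sum_congr rfl fun i _ => by rw [← hfa i]
    rw [step2]
    refine Finset.sum_congr rfl fun p _ => ?_
    congr 1
    have step3 : ∑ i : Fin n, (if (i : ℕ) ≤ p then (1:ℝ) else 0) * b i
        = ∑ i : Fin n, (∑ q ∈ Finset.range n, (if (i : ℕ) ≤ q then ε q else 0)) *
            (if (i : ℕ) ≤ p then (1:ℝ) else 0) := by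
      refine Finset.sum_congr rfl fun i _ => by rw [← hgb i]; ring
    rw [step3, swap_ite]
  rw [hL, hR]
  refine Finset.sum_le_sum fun p _ => ?_
  refine mul_le_mul_of_nonneg_left ?_ (hδ0 p)
  refine Finset.sum_le_sum fun q _ => ?_
  refine mul_le_mul_of_nonneg_left ?_ (hε0 q)
  -- key combinatorial bound
  rcases le_total q p with hqp | hpq
  · -- use column sums
    have h1 : ∀ j : Fin n, (∑ i : Fin n, (if (i : ℕ) ≤ p then (1:ℝ) else 0) * D i j) ≤ 1 := by
      intro j
      refine le_trans (Finset.sum_le_sum fun i _ => ?_) (hcol j)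
      by_cases h : (i : ℕ) ≤ p <;> simp [h, hD0 i j]
    calc ∑ j : Fin n, (if (j : ℕ) ≤ q then (1:ℝ) else 0) * ∑ i : Fin n, (if (i : ℕ) ≤ p then (1:ℝ) else 0) * D i j
        ≤ ∑ j : Fin n, (if (j : ℕ) ≤ q then (1:ℝ) else 0) * 1 := by
          refine Finset.sum_le_sum fun j _ => ?_
          by_cases h : (j : ℕ) ≤ q
          · simp only [h, if_true, one_mul]; exact h1 j
          · simp [h]
      _ = ∑ i : Fin n, (if (i : ℕ) ≤ q then (1:ℝ) else 0) * (if (i : ℕ) ≤ p then (1:ℝ) else 0) := by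
          refine Finset.sum_congr rfl fun i _ => ?_
          by_cases h : (i : ℕ) ≤ q
          · simp [h, le_trans h hqp]
          · simp [h]
  · -- use row sums
    have hswap : ∑ j : Fin n, (if (j : ℕ) ≤ q then (1:ℝ) else 0) * ∑ i : Fin n, (if (i : ℕ) ≤ p then (1:ℝ) else 0) * D i j
        = ∑ i : Fin n, (if (i : ℕ) ≤ p then (1:ℝ) else 0) * ∑ j : Fin n, (if (j : ℕ) ≤ q then (1:ℝ) else 0) * D i j := by
      simp_rw [Finset.mul_sum]
      rw [Finset.sum_comm]
      exact Finset.sum_congr rfl fun i _ => Finset.sum_congr rfl fun j _ => by ring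
    rw [hswap]
    have h1 : ∀ i : Fin n, (∑ j : Fin n, (if (j : ℕ) ≤ q then (1:ℝ) else 0) * D i j) ≤ 1 := by
      intro i
      refine le_trans (Finset.sum_le_sum fun j _ => ?_) (hrow i)
      by_cases h : (j : ℕ) ≤ q <;> simp [h, hD0 i j]
    calc ∑ i : Fin n, (if (i : ℕ) ≤ p then (1:ℝ) else 0) * ∑ j : Fin n, (if (j : ℕ) ≤ q then (1:ℝ) else 0) * D i j
        ≤ ∑ i : Fin n, (if (i : ℕ) ≤ p then (1:ℝ) else 0) * 1 := by
          refine Finset.sum_le_sum fun i _ => ?_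
          by_cases h : (i : ℕ) ≤ p
          · simp only [h, if_true, one_mul]; exact h1 i
          · simp [h]
      _ = ∑ i : Fin n, (if (i : ℕ) ≤ q then (1:ℝ) else 0) * (if (i : ℕ) ≤ p then (1:ℝ) else 0) := by
          refine Finset.sum_congr rfl fun i _ => ?_
          by_cases h : (i : ℕ) ≤ p
          · simp [h, le_trans h hpq]
          · simp [h]


end FidAux

open FidAux

/-- Fidelity ordering lemma: for PSD matrices `ρ, σ` with non-increasingly ordered
eigenvalues `r_i`, `s_i`, one has `‖√ρ√σ‖₁ ≤ Σ_i √(r_i s_i)`, with equality when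
`ρ` is replaced by `ρ̃ = Σ_i r_i|v_i⟩⟨v_i|` diagonal in the eigenbasis of `σ`. -/
theorem fidelity_ordering {n : ℕ}
    (ρ σ : Matrix (Fin n) (Fin n) ℂ) (hρ : ρ.PosSemidef) (hσ : σ.PosSemidef)
    (r s : Fin n → ℝ) (u v : Fin n → Fin n → ℂ)
    (hu : ∀ i i', star (u i) ⬝ᵥ u i' = if i = i' then 1 else 0)
    (hv : ∀ i i', star (v i) ⬝ᵥ v i' = if i = i' then 1 else 0)
    (hρdec : ρ = ∑ i, ((r i : ℝ) : ℂ) • vecMulVec (u i) (star (u i)))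
    (hσdec : σ = ∑ i, ((s i : ℝ) : ℂ) • vecMulVec (v i) (star (v i)))
    (hrmono : Antitone r) (hsmono : Antitone s)
    (hrnn : ∀ i, 0 ≤ r i) (hsnn : ∀ i, 0 ≤ s i) :
    trNorm (psdSqrt ρ * psdSqrt σ) ≤ ∑ i, Real.sqrt (r i * s i) ∧
    trNorm (psdSqrt (∑ i, ((r i : ℝ) : ℂ) • vecMulVec (v i) (star (v i))) * psdSqrt σ)
      = ∑ i, Real.sqrt (r i * s i) := by
  classical
  have ha0 : ∀ i, 0 ≤ Real.sqrt (r i) := fun i => Real.sqrt_nonneg _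
  have hb0 : ∀ i, 0 ≤ Real.sqrt (s i) := fun i => Real.sqrt_nonneg _
  have hamono : Antitone (fun i => Real.sqrt (r i)) :=
    fun i j hij => Real.sqrt_le_sqrt (hrmono hij)
  have hbmono : Antitone (fun i => Real.sqrt (s i)) :=
    fun i j hij => Real.sqrt_le_sqrt (hsmono hij)
  have hsqrtσ : psdSqrt σ = ∑ i, ((Real.sqrt (s i) : ℝ) : ℂ) • vecMulVec (v i) (star (v i)) := by
    rw [hσdec]; exact psdSqrt_sum v hv s hsnn
  have hsqrtρ : psdSqrt ρ = ∑ i, ((Real.sqrt (r i) : ℝ) : ℂ) • vecMulVec (u i) (star (u i)) := by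
    rw [hρdec]; exact psdSqrt_sum u hu r hrnn
  have hsum_eq : ∑ i, Real.sqrt (r i * s i) = ∑ i, Real.sqrt (r i) * Real.sqrt (s i) :=
    Finset.sum_congr rfl fun i _ => Real.sqrt_mul (hrnn i) _
  constructor
  · -- inequality part
    set A : Matrix (Fin n) (Fin n) ℂ := psdSqrt ρ * psdSqrt σ with hAdef
    have hAexp : A = ∑ i, ∑ j,
        (((Real.sqrt (r i) * Real.sqrt (s j) : ℝ) : ℂ) * (star (u i) ⬝ᵥ v j)) •
          vecMulVec (u i) (star (v j)) := by
      rw [hAdef, hsqrtρ, hsqrtσ, Finset.sum_mul_sum]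
      refine Finset.sum_congr rfl fun i _ => Finset.sum_congr rfl fun j _ => ?_
      rw [Matrix.smul_mul, Matrix.mul_smul, vmv_mul, smul_smul, smul_smul]
      push_cast
      ring_nf
    have hPSD : (A * Aᴴ).PosSemidef := Matrix.posSemidef_self_mul_conjTranspose A
    obtain ⟨t, w, ht0, hw, hMsum⟩ := psd_spectral (A * Aᴴ) hPSD
    have htr : trNorm A = ∑ k, Real.sqrt (t k) := by
      rw [trNorm, hMsum, psdSqrt_sum w hw t ht0, sum_vmv_trace w hw, Complex.re_sum]
      exact Finset.sum_congr rfl fun k _ => Complex.ofReal_re _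
    rw [htr, hsum_eq]
    -- the vectors g and φ
    set g : Fin n → Fin n → ℂ := fun k => Aᴴ *ᵥ w k with hgdef
    have hMulVec : ∀ l, (A * Aᴴ) *ᵥ w l = ((t l : ℝ) : ℂ) • w l := by
      intro l
      rw [hMsum]
      exact sum_vmv_mulVec w hw _ l
    have hgg : ∀ k l, star (g k) ⬝ᵥ g l = if k = l then ((t l : ℝ) : ℂ) else 0 := by
      intro k l
      rw [hgdef]
      dsimp only
      rw [star_mulVec, conjTranspose_conjTranspose, ← dotProduct_mulVec, mulVec_mulVec,
        hMulVec l, dotProduct_smul, hw k l, smul_eq_mul]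
      by_cases h : k = l <;> simp [h]
    set φ : Fin n → Fin n → ℂ := fun k => (((Real.sqrt (t k))⁻¹ : ℝ) : ℂ) • g k with hφdef
    have hφφ : ∀ k l, star (φ k) ⬝ᵥ φ l
        = if k = l then (if t k ≠ 0 then 1 else 0) else 0 := by
      intro k l
      rw [hφdef]
      dsimp only
      rw [star_smul, smul_dotProduct, dotProduct_smul, hgg k l, smul_eq_mul, smul_eq_mul]
      by_cases h : k = l
      · subst h
        simp only [if_pos rfl, if_true]
        rw [show star ((((Real.sqrt (t k))⁻¹ : ℝ)) : ℂ) = ((((Real.sqrt (t k))⁻¹ : ℝ)) : ℂ)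
          from Complex.conj_ofReal _]
        by_cases ht : t k = 0
        · simp [ht]
        · rw [if_pos ht, ← Complex.ofReal_mul, ← Complex.ofReal_mul]
          norm_cast
          have hne : Real.sqrt (t k) ≠ 0 := by
            rw [Real.sqrt_ne_zero' ]
            exact lt_of_le_of_ne (ht0 k) (Ne.symm ht)
          field_simp
          exact (Real.sq_sqrt (ht0 k)).symm
      · simp [h]
    have hkey : ∀ k, Real.sqrt (t k) = (star (w k) ⬝ᵥ (A *ᵥ φ k)).re := by
      intro k
      have hAφ : A *ᵥ φ k = ((((Real.sqrt (t k))⁻¹ * t k : ℝ)) : ℂ) • w k := by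
        rw [hφdef]
        dsimp only
        rw [mulVec_smul, hgdef]
        dsimp only
        rw [mulVec_mulVec, hMulVec k, smul_smul, ← Complex.ofReal_mul]
      rw [hAφ, dotProduct_smul, hw k k, if_pos rfl, smul_eq_mul, mul_one, Complex.ofReal_re]
      rcases eq_or_ne (t k) 0 with h | h
      · simp [h]
      · have hne : Real.sqrt (t k) ≠ 0 := by
          rw [Real.sqrt_ne_zero']
          exact lt_of_le_of_ne (ht0 k) (Ne.symm h)
        rw [inv_mul_eq_div, eq_div_iff hne]
        exact Real.mul_self_sqrt (ht0 k)
    set β : Fin n → Fin n → ℂ := fun i j => star (u i) ⬝ᵥ v j with hβdef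
    set γ : Fin n → Fin n → ℂ :=
      fun i j => ∑ k, (star (v j) ⬝ᵥ φ k) * (star (w k) ⬝ᵥ u i) with hγdef
    have hexpand : ∀ k, star (w k) ⬝ᵥ (A *ᵥ φ k)
        = ∑ i, ∑ j, ((Real.sqrt (r i) * Real.sqrt (s j) : ℝ) : ℂ) *
            (β i j * ((star (v j) ⬝ᵥ φ k) * (star (w k) ⬝ᵥ u i))) := by
      intro k
      conv_lhs => rw [hAexp]
      rw [FidAux.sum_mulVec, dp_sum]
      refine Finset.sum_congr rfl fun i _ => ?_
      rw [FidAux.sum_mulVec, dp_sum]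
      refine Finset.sum_congr rfl fun j _ => ?_
      rw [Matrix.smul_mulVec, vmv_mulVec, dotProduct_smul, dotProduct_smul, hβdef]
      dsimp only
      rw [smul_eq_mul, smul_eq_mul]
      ring
    have hS2 : ∑ k, Real.sqrt (t k) = ∑ i, ∑ j,
        (Real.sqrt (r i) * Real.sqrt (s j)) * (β i j * γ i j).re := by
      have h1 : ∑ k, Real.sqrt (t k)
          = ∑ k, ∑ i, ∑ j, (((Real.sqrt (r i) * Real.sqrt (s j) : ℝ) : ℂ) *
              (β i j * ((star (v j) ⬝ᵥ φ k) * (star (w k) ⬝ᵥ u i)))).re := by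
        refine Finset.sum_congr rfl fun k _ => ?_
        rw [hkey k, hexpand k, Complex.re_sum]
        exact Finset.sum_congr rfl fun i _ => by rw [Complex.re_sum]
      rw [h1, Finset.sum_comm]
      refine Finset.sum_congr rfl fun i _ => ?_
      rw [Finset.sum_comm]
      refine Finset.sum_congr rfl fun j _ => ?_
      rw [← Complex.re_sum, ← Finset.mul_sum, ← Finset.mul_sum]
      have hfold : (∑ k, (star (v j) ⬝ᵥ φ k) * (star (w k) ⬝ᵥ u i)) = γ i j := rfl
      rw [hfold, Complex.mul_re]
      simp
    -- bounds on row and column sums of |β|² and |γ|²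
    have hβconj : ∀ i j, Complex.normSq (β i j) = Complex.normSq (star (v j) ⬝ᵥ u i) := by
      intro i j
      rw [hβdef]
      dsimp only
      rw [star_dotProduct]
      exact Complex.normSq_conj _
    have hβrow : ∀ i, ∑ j, Complex.normSq (β i j) ≤ 1 := by
      intro i
      simp_rw [hβconj]
      rw [parseval1 v hv (u i), hu i i, if_pos rfl]
      simp
    have hβcol : ∀ j, ∑ i, Complex.normSq (β i j) ≤ 1 := by
      intro j
      rw [hβdef]
      dsimp only
      rw [parseval1 u hu (v j), hv j j, if_pos rfl]
      simp
    have hγsplit : ∀ i j, (γ i j) * star (γ i j)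
        = ∑ k, ∑ k', ((star (v j) ⬝ᵥ φ k) * star (star (v j) ⬝ᵥ φ k')) *
            ((star (w k) ⬝ᵥ u i) * star (star (w k') ⬝ᵥ u i)) := by
      intro i j
      rw [hγdef]
      dsimp only
      rw [star_sum, Finset.sum_mul_sum]
      refine Finset.sum_congr rfl fun k _ => Finset.sum_congr rfl fun k' _ => ?_
      rw [star_mul']
      ring
    have hγrow : ∀ i, ∑ j, Complex.normSq (γ i j) ≤ 1 := by
      intro i
      have hC : ∑ j, (γ i j) * star (γ i j)
          = ∑ k, ((star (w k) ⬝ᵥ u i) * star (star (w k) ⬝ᵥ u i)) *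
              (if t k ≠ 0 then 1 else 0) := by
        calc ∑ j, (γ i j) * star (γ i j)
            = ∑ j, ∑ k, ∑ k', ((star (v j) ⬝ᵥ φ k) * star (star (v j) ⬝ᵥ φ k')) *
                ((star (w k) ⬝ᵥ u i) * star (star (w k') ⬝ᵥ u i)) :=
              Finset.sum_congr rfl fun j _ => hγsplit i j
          _ = ∑ k, ∑ k', (∑ j, (star (v j) ⬝ᵥ φ k) * star (star (v j) ⬝ᵥ φ k')) *
                ((star (w k) ⬝ᵥ u i) * star (star (w k') ⬝ᵥ u i)) := by
              rw [Finset.sum_comm]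
              refine Finset.sum_congr rfl fun k _ => ?_
              rw [Finset.sum_comm]
              refine Finset.sum_congr rfl fun k' _ => ?_
              rw [Finset.sum_mul]
          _ = ∑ k, ∑ k', (star (φ k') ⬝ᵥ φ k) *
                ((star (w k) ⬝ᵥ u i) * star (star (w k') ⬝ᵥ u i)) := by
              refine Finset.sum_congr rfl fun k _ => Finset.sum_congr rfl fun k' _ => ?_
              rw [parseval2 v hv (φ k) (φ k')]
          _ = ∑ k, ((star (w k) ⬝ᵥ u i) * star (star (w k) ⬝ᵥ u i)) *
                (if t k ≠ 0 then 1 else 0) := by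
              refine Finset.sum_congr rfl fun k _ => ?_
              have hite : ∀ k', (star (φ k') ⬝ᵥ φ k) *
                  ((star (w k) ⬝ᵥ u i) * star (star (w k') ⬝ᵥ u i))
                  = if k' = k then ((star (w k) ⬝ᵥ u i) * star (star (w k) ⬝ᵥ u i)) *
                      (if t k ≠ 0 then 1 else 0) else 0 := by
                intro k'
                rw [hφφ k' k]
                by_cases h : k' = k
                · subst h
                  simp only [if_pos rfl, if_true]
                  ring
                · simp [h]
              simp_rw [hite]
              rw [Finset.sum_ite_eq']
              simp
      have hC2 : ∑ j, Complex.normSq (γ i j)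
          = ∑ k, Complex.normSq (star (w k) ⬝ᵥ u i) * (if t k ≠ 0 then 1 else 0) := by
        have hL : ((∑ j, Complex.normSq (γ i j) : ℝ) : ℂ) = ∑ j, (γ i j) * star (γ i j) := by
          push_cast
          refine Finset.sum_congr rfl fun j _ => ?_
          rw [Complex.star_def, Complex.mul_conj]
        have hR : ((∑ k, Complex.normSq (star (w k) ⬝ᵥ u i) * (if t k ≠ 0 then 1 else 0) : ℝ) : ℂ)
            = ∑ k, ((star (w k) ⬝ᵥ u i) * star (star (w k) ⬝ᵥ u i)) *
                (if t k ≠ 0 then 1 else 0) := by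
          push_cast
          refine Finset.sum_congr rfl fun k _ => ?_
          rw [Complex.star_def, Complex.mul_conj]
          by_cases h : t k ≠ 0 <;> simp [h]
        have := hL.trans (hC.trans hR.symm)
        exact_mod_cast this
      rw [hC2]
      have hle : ∑ k, Complex.normSq (star (w k) ⬝ᵥ u i) * (if t k ≠ 0 then 1 else 0)
          ≤ ∑ k, Complex.normSq (star (w k) ⬝ᵥ u i) := by
        refine Finset.sum_le_sum fun k _ => ?_
        by_cases h : t k ≠ 0 <;> simp [h, Complex.normSq_nonneg]
      refine le_trans hle ?_
      rw [parseval1 w hw (u i), hu i i, if_pos rfl]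
      simp
    have hγcol : ∀ j, ∑ i, Complex.normSq (γ i j) ≤ 1 := by
      intro j
      have hC : ∑ i, (γ i j) * star (γ i j)
          = ∑ k, (star (v j) ⬝ᵥ φ k) * star (star (v j) ⬝ᵥ φ k) := by
        calc ∑ i, (γ i j) * star (γ i j)
            = ∑ i, ∑ k, ∑ k', ((star (v j) ⬝ᵥ φ k) * star (star (v j) ⬝ᵥ φ k')) *
                ((star (w k) ⬝ᵥ u i) * star (star (w k') ⬝ᵥ u i)) :=
              Finset.sum_congr rfl fun i _ => hγsplit i j
          _ = ∑ k, ∑ k', ((star (v j) ⬝ᵥ φ k) * star (star (v j) ⬝ᵥ φ k')) *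
                (∑ i, (star (u i) ⬝ᵥ w k') * star (star (u i) ⬝ᵥ w k)) := by
              rw [Finset.sum_comm]
              refine Finset.sum_congr rfl fun k _ => ?_
              rw [Finset.sum_comm]
              refine Finset.sum_congr rfl fun k' _ => ?_
              rw [Finset.mul_sum]
              refine Finset.sum_congr rfl fun i _ => ?_
              have h1 : star (w k) ⬝ᵥ u i = star (star (u i) ⬝ᵥ w k) := star_dotProduct _ _
              have h2 : star (w k') ⬝ᵥ u i = star (star (u i) ⬝ᵥ w k') := star_dotProduct _ _
              rw [h1, h2, star_star]
              ring
          _ = ∑ k, ∑ k', ((star (v j) ⬝ᵥ φ k) * star (star (v j) ⬝ᵥ φ k')) *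
                (if k = k' then 1 else 0) := by
              refine Finset.sum_congr rfl fun k _ => Finset.sum_congr rfl fun k' _ => ?_
              rw [parseval2 u hu (w k') (w k), hw k k']
          _ = ∑ k, (star (v j) ⬝ᵥ φ k) * star (star (v j) ⬝ᵥ φ k) := by
              refine Finset.sum_congr rfl fun k _ => ?_
              have hite : ∀ k', ((star (v j) ⬝ᵥ φ k) * star (star (v j) ⬝ᵥ φ k')) *
                  (if k = k' then (1:ℂ) else 0)
                  = if k = k' then (star (v j) ⬝ᵥ φ k) * star (star (v j) ⬝ᵥ φ k) else 0 := by
                intro k'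
                by_cases h : k = k'
                · subst h; simp
                · simp [h]
              simp_rw [hite]
              rw [Finset.sum_ite_eq]
              simp
      have hC2 : ∑ i, Complex.normSq (γ i j)
          = ∑ k, Complex.normSq (star (v j) ⬝ᵥ φ k) := by
        have hL : ((∑ i, Complex.normSq (γ i j) : ℝ) : ℂ) = ∑ i, (γ i j) * star (γ i j) := by
          push_cast
          refine Finset.sum_congr rfl fun i _ => ?_
          rw [Complex.star_def, Complex.mul_conj]
        have hR : ((∑ k, Complex.normSq (star (v j) ⬝ᵥ φ k) : ℝ) : ℂ)
            = ∑ k, (star (v j) ⬝ᵥ φ k) * star (star (v j) ⬝ᵥ φ k) := by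
          push_cast
          refine Finset.sum_congr rfl fun k _ => ?_
          rw [Complex.star_def, Complex.mul_conj]
        have := hL.trans (hC.trans hR.symm)
        exact_mod_cast this
      rw [hC2]
      have hflip : ∀ k, Complex.normSq (star (v j) ⬝ᵥ φ k)
          = Complex.normSq (star (φ k) ⬝ᵥ v j) := by
        intro k
        rw [star_dotProduct]
        exact Complex.normSq_conj _
      simp_rw [hflip]
      refine le_trans (besselish φ (fun k => t k ≠ 0) hφφ (v j)) ?_
      rw [hv j j, if_pos rfl]
      simp
    -- apply the rearrangement bound
    have hds1 := ds_bound (fun i => Real.sqrt (r i)) (fun j => Real.sqrt (s j))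
      (fun i j => Complex.normSq (β i j)) hamono hbmono ha0 hb0
      (fun i j => Complex.normSq_nonneg _) hβrow hβcol
    have hds2 := ds_bound (fun i => Real.sqrt (r i)) (fun j => Real.sqrt (s j))
      (fun i j => Complex.normSq (γ i j)) hamono hbmono ha0 hb0
      (fun i j => Complex.normSq_nonneg _) hγrow hγcol
    rw [hS2]
    have hmain : ∑ i, ∑ j, (Real.sqrt (r i) * Real.sqrt (s j)) * (β i j * γ i j).re
        ≤ (∑ i, ∑ j, Real.sqrt (r i) * Real.sqrt (s j) * Complex.normSq (β i j)) / 2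
          + (∑ i, ∑ j, Real.sqrt (r i) * Real.sqrt (s j) * Complex.normSq (γ i j)) / 2 := by
      have hterm : ∀ i j, (Real.sqrt (r i) * Real.sqrt (s j)) * (β i j * γ i j).re
          ≤ Real.sqrt (r i) * Real.sqrt (s j) * Complex.normSq (β i j) / 2
            + Real.sqrt (r i) * Real.sqrt (s j) * Complex.normSq (γ i j) / 2 := by
        intro i j
        have h1 : (β i j * γ i j).re ≤ ‖β i j‖ * ‖γ i j‖ := by
          refine le_trans (Complex.re_le_norm _) ?_
          rw [norm_mul]
        have h2 : ‖β i j‖ * ‖γ i j‖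
            ≤ (Complex.normSq (β i j) + Complex.normSq (γ i j)) / 2 := by
          nlinarith [sq_nonneg (‖β i j‖ - ‖γ i j‖),
            Complex.sq_norm (β i j), Complex.sq_norm (γ i j)]
        calc (Real.sqrt (r i) * Real.sqrt (s j)) * (β i j * γ i j).re
            ≤ (Real.sqrt (r i) * Real.sqrt (s j)) *
                ((Complex.normSq (β i j) + Complex.normSq (γ i j)) / 2) :=
              mul_le_mul_of_nonneg_left (h1.trans h2) (mul_nonneg (ha0 i) (hb0 j))
          _ = Real.sqrt (r i) * Real.sqrt (s j) * Complex.normSq (β i j) / 2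
              + Real.sqrt (r i) * Real.sqrt (s j) * Complex.normSq (γ i j) / 2 := by ring
      refine le_trans (Finset.sum_le_sum fun i _ => Finset.sum_le_sum fun j _ => hterm i j)
        (le_of_eq ?_)
      rw [Finset.sum_div, Finset.sum_div, ← Finset.sum_add_distrib]
      refine Finset.sum_congr rfl fun i _ => ?_
      rw [Finset.sum_div, Finset.sum_div, ← Finset.sum_add_distrib]
    linarith [hds1, hds2, hmain]
  · -- equality part
    have hsqrtρ' : psdSqrt (∑ i, ((r i : ℝ) : ℂ) • vecMulVec (v i) (star (v i)))
        = ∑ i, ((Real.sqrt (r i) : ℝ) : ℂ) • vecMulVec (v i) (star (v i)) :=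
      psdSqrt_sum v hv r hrnn
    rw [trNorm, hsqrtρ', hsqrtσ, sum_vmv_mul v hv]
    have hprod : ∀ i : Fin n, ((Real.sqrt (r i) : ℝ) : ℂ) * ((Real.sqrt (s i) : ℝ) : ℂ)
        = ((Real.sqrt (r i) * Real.sqrt (s i) : ℝ) : ℂ) := fun i => (Complex.ofReal_mul _ _).symm
    simp_rw [hprod]
    have hherm : (∑ i, ((Real.sqrt (r i) * Real.sqrt (s i) : ℝ) : ℂ) •
        vecMulVec (v i) (star (v i)))ᴴ
        = ∑ i, ((Real.sqrt (r i) * Real.sqrt (s i) : ℝ) : ℂ) • vecMulVec (v i) (star (v i)) :=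
      sum_vmv_isHermitian v hv (fun i => Real.sqrt (r i) * Real.sqrt (s i))
    rw [hherm, sum_vmv_mul v hv]
    have hc2 : ∀ i : Fin n, ((Real.sqrt (r i) * Real.sqrt (s i) : ℝ) : ℂ) *
        ((Real.sqrt (r i) * Real.sqrt (s i) : ℝ) : ℂ) = ((r i * s i : ℝ) : ℂ) := by
      intro i
      rw [← Complex.ofReal_mul]
      congr 1
      rw [show Real.sqrt (r i) * Real.sqrt (s i) * (Real.sqrt (r i) * Real.sqrt (s i))
        = (Real.sqrt (r i) * Real.sqrt (r i)) * (Real.sqrt (s i) * Real.sqrt (s i)) by ring,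
        Real.mul_self_sqrt (hrnn i), Real.mul_self_sqrt (hsnn i)]
    simp_rw [hc2]
    rw [psdSqrt_sum v hv (fun i => r i * s i) (fun i => mul_nonneg (hrnn i) (hsnn i)),
      sum_vmv_trace v hv, Complex.re_sum]
    exact Finset.sum_congr rfl fun i _ => Complex.ofReal_re _
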